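/- J_P(x, z^a) ≥ J_P(x, y) and J_P(y, z^a) ≥ J_P(x, y) for the adversarial distribution z^a constructed from x, y at any index a in the common support. -/

import Mathlib

open Finset

open Classical in
/-- The probability Jaccard similarity of two nonnegative vectors. -/
noncomputable def JP {ι : Type*} [Fintype ι] (x y : ι → ℝ) : ℝ :=
  ∑ i ∈ Finset.univ.filter (fun i => 0 < x i ∧ 0 < y i),
    (∑ j, max (x j / x i) (y j / y i))⁻¹

private lemma ratio_le {n : ℕ} (x y : Fin n → ℝ)
    (hx : ∀ i, 0 < x i) (hy : ∀ i, 0 < y i) (a i j : Fin n) :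
    max (x j / x a) (y j / y a) / max (x i / x a) (y i / y a)
      ≤ max (x j / x i) (y j / y i) := by
  have hmi : 0 < max (x i / x a) (y i / y a) :=
    lt_max_of_lt_left (div_pos (hx i) (hx a))
  rw [div_le_iff₀ hmi]
  have h1 : x j / x a = (x j / x i) * (x i / x a) := by
    field_simp
    rw [mul_comm (x j) (x i), mul_comm (x a) (x i), mul_div_mul_left _ _ (hx i).ne']
  have h2 : y j / y a = (y j / y i) * (y i / y a) := by
    field_simp
    rw [mul_comm (y j) (y i), mul_comm (y a) (y i), mul_div_mul_left _ _ (hy i).ne']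
  rw [h1, h2]
  have hM : 0 ≤ max (x j / x i) (y j / y i) :=
    le_trans (le_of_lt (div_pos (hx j) (hx i))) (le_max_left _ _)
  apply max_le
  · exact mul_le_mul (le_max_left _ _) (le_max_left _ _)
      (le_of_lt (div_pos (hx i) (hx a))) hM
  · exact mul_le_mul (le_max_right _ _) (le_max_right _ _)
      (le_of_lt (div_pos (hy i) (hy a))) hM

private lemma JP_ge_aux {n : ℕ} (x y z : Fin n → ℝ) (hne : n ≠ 0)
    (hx : ∀ i, 0 < x i) (hy : ∀ i, 0 < y i) (hz : ∀ i, 0 < z i)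
    (h : ∀ i j, z j / z i ≤ max (x j / x i) (y j / y i)) :
    JP x z ≥ JP x y := by
  unfold JP
  rw [Finset.filter_true_of_mem (fun i _ => ⟨hx i, hz i⟩),
    Finset.filter_true_of_mem (fun i _ => ⟨hx i, hy i⟩)]
  apply Finset.sum_le_sum
  intro i _
  apply inv_anti₀
  · apply Finset.sum_pos
    · intro j _
      exact lt_max_of_lt_left (div_pos (hx j) (hx i))
    · exact Finset.univ_nonempty_iff.mpr ⟨⟨0, Nat.pos_of_ne_zero hne⟩⟩
  · apply Finset.sum_le_sum
    intro j _
    exact max_le (le_max_left _ _) (h i j)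

/-- The adversarial distribution `z^a` is at least as close (in `J_P`) to each of `x` and
`y` as they are to each other. -/
theorem JP_za_ge {n : ℕ} (x y : Fin n → ℝ)
    (hx : ∀ i, 0 < x i) (hy : ∀ i, 0 < y i)
    (hxs : ∑ i, x i = 1) (hys : ∑ i, y i = 1) (a : Fin n) :
    JP x (fun i => max (x i / x a) (y i / y a) / ∑ k, max (x k / x a) (y k / y a))
      ≥ JP x y ∧
    JP y (fun i => max (x i / x a) (y i / y a) / ∑ k, max (x k / x a) (y k / y a))
      ≥ JP x y := by
  set m : Fin n → ℝ := fun i => max (x i / x a) (y i / y a) with hm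
  have hmpos : ∀ i, 0 < m i := fun i => lt_max_of_lt_left (div_pos (hx i) (hx a))
  have hn : (Finset.univ : Finset (Fin n)).Nonempty := ⟨a, Finset.mem_univ a⟩
  have hS : 0 < ∑ k, m k := Finset.sum_pos (fun k _ => hmpos k) hn
  have hz : ∀ i, 0 < m i / ∑ k, m k := fun i => div_pos (hmpos i) hS
  have hzz : ∀ i j, (m j / ∑ k, m k) / (m i / ∑ k, m k) = m j / m i := by
    intro i j
    field_simp
  have hne : n ≠ 0 := fun h => (h ▸ a).elim0
  have hsymm : JP y x = JP x y := by
    unfold JP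
    rw [Finset.filter_true_of_mem (fun i _ => ⟨hy i, hx i⟩),
      Finset.filter_true_of_mem (fun i _ => ⟨hx i, hy i⟩)]
    refine Finset.sum_congr rfl fun i _ => ?_
    congr 1
    exact Finset.sum_congr rfl fun j _ => max_comm _ _
  constructor
  · apply JP_ge_aux x y _ hne hx hy hz
    intro i j
    rw [hzz]
    exact ratio_le x y hx hy a i j
  · rw [← hsymm]
    apply JP_ge_aux y x _ hne hy hx hz
    intro i j
    rw [hzz]
    have := ratio_le x y hx hy a i j
    rw [max_comm (y j / y i)]
    exact this
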